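/- Let φ: B_R \ {0} → ℝ be a harmonic function on the punctured disk of radius R in ℝ², of the form φ(r,ψ) = φ_P(r,ψ) + (Q/(2π)) ln r + Σ_{n≥1} b_n r^{-n} sin(nψ + c_n), where φ_P is smooth and bounded on all of B_R. If the integral ∫_{B_R} e^{2φ} dA (the conformal area) is finite, then b_n = 0 for all n ≥ 1 and Q > −2π. -/

import Mathlib

open MeasureTheory Real Filter

lemma intCos (m : ℤ) (hm : m ≠ 0) (e : ℝ) :
    ∫ ψ in (0:ℝ)..(2*π), Real.cos ((m:ℝ)*ψ + e) = 0 := by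
  have hm' : (m:ℝ) ≠ 0 := Int.cast_ne_zero.mpr hm
  have hderiv : ∀ x ∈ Set.uIcc (0:ℝ) (2*π),
      HasDerivAt (fun ψ => Real.sin ((m:ℝ)*ψ + e) / m) (Real.cos ((m:ℝ)*x + e)) x := by
    intro x _
    have h1 : HasDerivAt (fun ψ : ℝ => (m:ℝ)*ψ + e) (m:ℝ) x := by
      simpa using ((hasDerivAt_id x).const_mul (m:ℝ)).add_const e
    have h2 := (h1.sin).div_const (m:ℝ)
    simpa [mul_div_assoc, mul_div_cancel_right₀ _ hm'] using h2
  rw [intervalIntegral.integral_eq_sub_of_hasDerivAt hderiv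
    ((Real.continuous_cos.comp (by continuity)).intervalIntegrable _ _)]
  have : (m:ℝ) * (2*π) + e = e + (m:ℝ) * (2*π) := by ring
  rw [this, Real.sin_add_int_mul_two_pi]
  simp

lemma intSin (m : ℤ) (hm : m ≠ 0) (e : ℝ) :
    ∫ ψ in (0:ℝ)..(2*π), Real.sin ((m:ℝ)*ψ + e) = 0 := by
  have hm' : (m:ℝ) ≠ 0 := Int.cast_ne_zero.mpr hm
  have hderiv : ∀ x ∈ Set.uIcc (0:ℝ) (2*π),
      HasDerivAt (fun ψ => -(Real.cos ((m:ℝ)*ψ + e) / m)) (Real.sin ((m:ℝ)*x + e)) x := by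
    intro x _
    have h1 : HasDerivAt (fun ψ : ℝ => (m:ℝ)*ψ + e) (m:ℝ) x := by
      simpa using ((hasDerivAt_id x).const_mul (m:ℝ)).add_const e
    have h2 := ((h1.cos).div_const (m:ℝ)).neg
    refine h2.congr_deriv ?_
    field_simp
  rw [intervalIntegral.integral_eq_sub_of_hasDerivAt hderiv
    ((Real.continuous_sin.comp (by continuity)).intervalIntegrable _ _)]
  have : (m:ℝ) * (2*π) + e = e + (m:ℝ) * (2*π) := by ring
  rw [this, Real.cos_add_int_mul_two_pi]
  simp

lemma intSinSin (k l : ℕ) (hk : k ≠ 0) (hl : l ≠ 0) (d e : ℝ) :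
    ∫ ψ in (0:ℝ)..(2*π), Real.sin ((k:ℝ)*ψ + d) * Real.sin ((l:ℝ)*ψ + e) =
      if k = l then π * Real.cos (d - e) else 0 := by
  have key : ∀ ψ : ℝ, Real.sin ((k:ℝ)*ψ + d) * Real.sin ((l:ℝ)*ψ + e) =
      (Real.cos ((((k:ℤ)-(l:ℤ)):ℝ)*ψ + (d - e)) - Real.cos ((((k:ℤ)+(l:ℤ)):ℝ)*ψ + (d + e))) / 2 := by
    intro ψ
    have h1 : (((k:ℤ)-(l:ℤ)):ℝ)*ψ + (d - e) = ((k:ℝ)*ψ + d) - ((l:ℝ)*ψ + e) := by push_cast; ring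
    have h2 : (((k:ℤ)+(l:ℤ)):ℝ)*ψ + (d + e) = ((k:ℝ)*ψ + d) + ((l:ℝ)*ψ + e) := by push_cast; ring
    have base : ∀ X Y : ℝ, Real.sin X * Real.sin Y = (Real.cos (X - Y) - Real.cos (X + Y))/2 := by
      intro X Y; rw [Real.cos_sub, Real.cos_add]; ring
    rw [h1, h2, base]
  simp only [key]
  have hc1 : IntervalIntegrable (fun ψ => Real.cos ((((k:ℤ)-(l:ℤ)):ℝ)*ψ + (d - e))) volume 0 (2*π) :=
    (Real.continuous_cos.comp (by continuity)).intervalIntegrable _ _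
  have hc2 : IntervalIntegrable (fun ψ => Real.cos ((((k:ℤ)+(l:ℤ)):ℝ)*ψ + (d + e))) volume 0 (2*π) :=
    (Real.continuous_cos.comp (by continuity)).intervalIntegrable _ _
  have hz2 : (∫ x in (0:ℝ)..(2*π), Real.cos ((((k:ℤ)+(l:ℤ)):ℝ)*x + (d+e))) = 0 := by
    have h := intCos ((k:ℤ)+(l:ℤ)) (by positivity) (d+e)
    convert h using 3 <;> push_cast <;> ring
  rw [intervalIntegral.integral_div, intervalIntegral.integral_sub hc1 hc2, hz2]
  by_cases hkl : k = l
  · subst hkl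
    simp only [sub_self, Int.cast_zero, zero_mul, zero_add, if_pos rfl]
    rw [intervalIntegral.integral_const]
    simp [two_mul]
    ring
  · have hz1 : (∫ x in (0:ℝ)..(2*π), Real.cos ((((k:ℤ)-(l:ℤ)):ℝ)*x + (d-e))) = 0 := by
      have h := intCos ((k:ℤ)-(l:ℤ))
        (sub_ne_zero.mpr (fun h => hkl (by exact_mod_cast h))) (d-e)
      convert h using 3 <;> push_cast <;> ring
    rw [hz1]
    simp [hkl]

lemma iooEq' (g : ℝ → ℝ) : ∫ ψ in Set.Ioo (0:ℝ) (2*π), g ψ = ∫ ψ in (0:ℝ)..(2*π), g ψ := by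
  rw [intervalIntegral.integral_of_le (by positivity : (0:ℝ) ≤ 2*π), integral_Ioc_eq_integral_Ioo]

lemma decay (b c : ℕ → ℝ) (ρ : ℝ) (hρ : 0 < ρ)
    (hsum : ∀ ψ : ℝ, Summable fun n : ℕ =>
      b (n + 1) * (ρ ^ (n + 1))⁻¹ * Real.sin (((n : ℝ) + 1) * ψ + c (n + 1))) :
    Tendsto (fun n => |b (n+1)| * (ρ ^ (n+1))⁻¹) atTop (nhds 0) := by
  set a : ℕ → ℝ := fun n => |b (n+1)| * (ρ ^ (n+1))⁻¹ with ha
  have hpt : ∀ ψ : ℝ, Tendsto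
      (fun n => min 1 (a n) * Real.sin (((n:ℝ)+1)*ψ + c (n+1))^2) atTop (nhds 0) := by
    intro ψ
    have hterm : Tendsto (fun n => |b (n+1) * (ρ^(n+1))⁻¹ * Real.sin (((n:ℝ)+1)*ψ + c (n+1))|)
        atTop (nhds 0) := by
      simpa using ((hsum ψ).tendsto_atTop_zero).abs
    refine squeeze_zero (fun n => by positivity) (fun n => ?_) hterm
    have hs1 : |Real.sin (((n:ℝ)+1)*ψ + c (n+1))| ≤ 1 := abs_sin_le_one _
    have h1 : min 1 (a n) ≤ a n := min_le_right _ _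
    have h2 : min 1 (a n) ≤ 1 := min_le_left _ _
    have h3 : (0:ℝ) ≤ min 1 (a n) := le_min zero_le_one (by positivity)
    have h4 : Real.sin (((n:ℝ)+1)*ψ + c (n+1))^2 = |Real.sin (((n:ℝ)+1)*ψ + c (n+1))| *
        |Real.sin (((n:ℝ)+1)*ψ + c (n+1))| := by rw [sq, ← abs_mul_abs_self]
    have h5 : |b (n+1) * (ρ^(n+1))⁻¹ * Real.sin (((n:ℝ)+1)*ψ + c (n+1))|
        = a n * |Real.sin (((n:ℝ)+1)*ψ + c (n+1))| := by
      rw [abs_mul, abs_mul, abs_of_nonneg (by positivity : (0:ℝ) ≤ (ρ^(n+1))⁻¹)]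
    rw [h4, h5]
    have habs : (0:ℝ) ≤ |Real.sin (((n:ℝ)+1)*ψ + c (n+1))| := abs_nonneg _
    have han : (0:ℝ) ≤ a n := by simp only [ha]; positivity
    calc min 1 (a n) * (|Real.sin (((n:ℝ)+1)*ψ + c (n+1))| * |Real.sin (((n:ℝ)+1)*ψ + c (n+1))|)
        ≤ a n * (|Real.sin (((n:ℝ)+1)*ψ + c (n+1))| * |Real.sin (((n:ℝ)+1)*ψ + c (n+1))|) :=
          mul_le_mul_of_nonneg_right h1 (by positivity)
      _ ≤ a n * (1 * |Real.sin (((n:ℝ)+1)*ψ + c (n+1))|) :=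
          mul_le_mul_of_nonneg_left (mul_le_mul_of_nonneg_right hs1 habs) han
      _ = a n * |Real.sin (((n:ℝ)+1)*ψ + c (n+1))| := by ring
  have hint : ∀ n : ℕ, (∫ ψ in Set.Ioo (0:ℝ) (2*π),
      min 1 (a n) * Real.sin (((n:ℝ)+1)*ψ + c (n+1))^2) = min 1 (a n) * π := by
    intro n
    rw [MeasureTheory.integral_const_mul, iooEq']
    have := intSinSin (n+1) (n+1) (Nat.succ_ne_zero n) (Nat.succ_ne_zero n) (c (n+1)) (c (n+1))
    simp only [if_pos rfl, sub_self, Real.cos_zero, mul_one] at this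
    have harg : ∀ ψ : ℝ, Real.sin (((n:ℝ)+1)*ψ + c (n+1))^2
        = Real.sin (((n+1:ℕ):ℝ)*ψ + c (n+1)) * Real.sin (((n+1:ℕ):ℝ)*ψ + c (n+1)) := by
      intro ψ; push_cast; rw [sq]
    simp_rw [harg]
    rw [this]
    simp
  have hdct : Tendsto (fun n => ∫ ψ in Set.Ioo (0:ℝ) (2*π),
      min 1 (a n) * Real.sin (((n:ℝ)+1)*ψ + c (n+1))^2) atTop (nhds 0) := by
    have hmeas : ∀ n : ℕ, AEStronglyMeasurable
        (fun ψ : ℝ => min 1 (a n) * Real.sin (((n:ℝ)+1)*ψ + c (n+1))^2)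
        (volume.restrict (Set.Ioo (0:ℝ) (2*π))) := by
      intro n
      exact (continuous_const.mul ((Real.continuous_sin.comp
        ((continuous_const.mul continuous_id).add continuous_const)).pow 2)).aestronglyMeasurable
    have hdct0 := MeasureTheory.tendsto_integral_of_dominated_convergence
      (μ := volume.restrict (Set.Ioo (0:ℝ) (2*π)))
      (F := fun n ψ => min 1 (a n) * Real.sin (((n:ℝ)+1)*ψ + c (n+1))^2)
      (f := fun _ => (0:ℝ)) (fun _ => (1:ℝ)) hmeas ?_ (fun n => ?_) ?_
    · simpa using hdct0
    · exact (integrableOn_const (by rw [Real.volume_Ioo]; exact ENNReal.ofReal_ne_top))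
    · filter_upwards with ψ
      have hs1 : |Real.sin (((n:ℝ)+1)*ψ + c (n+1))| ≤ 1 := abs_sin_le_one _
      have h1 : min 1 (a n) ≤ 1 := min_le_left _ _
      have h3 : (0:ℝ) ≤ min 1 (a n) := le_min zero_le_one (by positivity)
      have : ‖min 1 (a n) * Real.sin (((n:ℝ)+1)*ψ + c (n+1))^2‖
          = min 1 (a n) * Real.sin (((n:ℝ)+1)*ψ + c (n+1))^2 := by
        rw [Real.norm_eq_abs, abs_of_nonneg (by positivity)]
      rw [this]
      have hsq : Real.sin (((n:ℝ)+1)*ψ + c (n+1))^2 ≤ 1 := by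
        rw [← sq_abs]; nlinarith [abs_nonneg (Real.sin (((n:ℝ)+1)*ψ + c (n+1)))]
      nlinarith [mul_le_mul h1 hsq (sq_nonneg (Real.sin (((n:ℝ)+1)*ψ + c (n+1)))) zero_le_one]
    · filter_upwards with ψ using hpt ψ
  simp_rw [hint] at hdct
  have hmin : Tendsto (fun n => min 1 (a n)) atTop (nhds 0) := by
    have := hdct.div_const π
    simpa [mul_div_assoc, div_self (ne_of_gt Real.pi_pos)] using this
  have hev : ∀ᶠ n in atTop, min 1 (a n) = a n := by
    filter_upwards [hmin.eventually (gt_mem_nhds (zero_lt_one))] with n hn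
    rcases le_or_gt (a n) 1 with h | h
    · exact min_eq_right h
    · exact absurd hn (by simp [min_eq_left h.le]; )
  exact hmin.congr' hev

lemma summ (b c : ℕ → ℝ) (r : ℝ) (hr : 0 < r)
    (hsum : ∀ ρ ψ : ℝ, 0 < ρ → Summable fun n : ℕ =>
      b (n + 1) * (ρ ^ (n + 1))⁻¹ * Real.sin (((n : ℝ) + 1) * ψ + c (n + 1))) :
    Summable fun n => |b (n+1)| * (r ^ (n+1))⁻¹ := by
  have hd := decay b c (r/2) (by positivity) (fun ψ => hsum (r/2) ψ (by positivity))
  obtain ⟨C, hC⟩ := hd.bddAbove_range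
  have hCn : ∀ n, |b (n+1)| * ((r/2) ^ (n+1))⁻¹ ≤ C := fun n => hC ⟨n, rfl⟩
  refine Summable.of_nonneg_of_le (fun n => by positivity)
    (fun n => ?_) (((summable_geometric_of_lt_one (by norm_num) (by norm_num : (1:ℝ)/2 < 1)).mul_left C).mul_right ((1:ℝ)/2))
  have key : |b (n+1)| * (r ^ (n+1))⁻¹ = (|b (n+1)| * ((r/2) ^ (n+1))⁻¹) * ((1:ℝ)/2)^(n+1) := by
    rw [mul_assoc]
    congr 1
    have hrn : (r:ℝ)^(n+1) ≠ 0 := pow_ne_zero _ hr.ne'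
    rw [div_pow]
    field_simp
    rw [← mul_pow]; norm_num
  rw [key]
  calc (|b (n+1)| * ((r/2) ^ (n+1))⁻¹) * ((1:ℝ)/2)^(n+1)
      ≤ C * ((1:ℝ)/2)^(n+1) := by
        apply mul_le_mul_of_nonneg_right (hCn n) (by positivity)
    _ = C * ((1:ℝ)/2)^n * ((1:ℝ)/2) := by ring

lemma slice_bound (R Q M : ℝ) (φP : ℝ → ℝ → ℝ) (b c : ℕ → ℝ) (N : ℕ) (hN : 1 ≤ N)
    (hM : ∀ r ψ : ℝ, 0 ≤ r → r ≤ R → |φP r ψ| ≤ M)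
    (ε : ℝ) (hε1 : |ε| ≤ 1)
    (r : ℝ) (hr0 : 0 < r) (hrR : r < R)
    (hsummable : Summable fun n => |b (n+1)| * (r ^ (n+1))⁻¹)
    (hgint : Integrable (fun ψ => Real.exp (2 * (φP r ψ + Q / (2 * π) * Real.log r +
        ∑' n : ℕ, b (n + 1) * (r ^ (n + 1))⁻¹ * Real.sin (((n : ℝ) + 1) * ψ + c (n + 1)))) * r)
      (volume.restrict (Set.Ioo (0:ℝ) (2*π)))) :
    π * Real.exp (-(2*M)) * r ^ (Q/π) * r * Real.exp (ε * b N * (r^N)⁻¹) ≤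
      ∫ ψ in Set.Ioo (0:ℝ) (2*π), Real.exp (2 * (φP r ψ + Q / (2 * π) * Real.log r +
        ∑' n : ℕ, b (n + 1) * (r ^ (n + 1))⁻¹ * Real.sin (((n : ℝ) + 1) * ψ + c (n + 1)))) * r := by
  have hπ : (0:ℝ) < π := Real.pi_pos
  have hNR : (N:ℝ) ≠ 0 := Nat.cast_ne_zero.mpr (by omega)
  set t : ℝ := ε * b N * (r^N)⁻¹ with ht
  set w : ℝ → ℝ := fun ψ => (1 + ε * Real.sin ((N:ℝ)*ψ + c N))/2 with hw
  have hwc : Continuous w := by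
    apply Continuous.div_const
    exact continuous_const.add (continuous_const.mul (Real.continuous_sin.comp
      ((continuous_const.mul continuous_id).add continuous_const)))
  have hwsin : ∀ ψ : ℝ, |ε * Real.sin ((N:ℝ)*ψ + c N)| ≤ 1 := by
    intro ψ
    rw [abs_mul]
    calc |ε| * |Real.sin ((N:ℝ)*ψ + c N)| ≤ 1 * 1 :=
      mul_le_mul hε1 (abs_sin_le_one _) (abs_nonneg _) zero_le_one
    _ = 1 := one_mul 1
  have hw0 : ∀ ψ, 0 ≤ w ψ := by
    intro ψ
    have h := neg_abs_le (ε * Real.sin ((N:ℝ)*ψ + c N))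
    have := hwsin ψ
    simp only [hw]
    linarith
  have hw1 : ∀ ψ, w ψ ≤ 1 := by
    intro ψ
    have h := le_abs_self (ε * Real.sin ((N:ℝ)*ψ + c N))
    have := hwsin ψ
    simp only [hw]
    linarith
  set F : ℝ → ℝ := fun ψ => ∑' n : ℕ, b (n+1) * (r^(n+1))⁻¹ * Real.sin (((n:ℝ)+1)*ψ + c (n+1))
    with hFdef
  set T : ℕ → ℝ → ℝ := fun n ψ => b (n+1) * (r^(n+1))⁻¹ * Real.sin (((n:ℝ)+1)*ψ + c (n+1)) with hT
  have hterm_cont : ∀ n : ℕ, Continuous (T n) := by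
    intro n
    exact continuous_const.mul (Real.continuous_sin.comp
      ((continuous_const.mul continuous_id).add continuous_const))
  have hterm_bd : ∀ (n : ℕ) (ψ : ℝ), ‖T n ψ‖ ≤ |b (n+1)| * (r^(n+1))⁻¹ := by
    intro n ψ
    simp only [hT, Real.norm_eq_abs, abs_mul, abs_of_nonneg (by positivity : (0:ℝ) ≤ (r^(n+1))⁻¹)]
    calc |b (n+1)| * (r^(n+1))⁻¹ * |Real.sin (((n:ℝ)+1)*ψ + c (n+1))|
        ≤ |b (n+1)| * (r^(n+1))⁻¹ * 1 :=
          mul_le_mul_of_nonneg_left (abs_sin_le_one _) (by positivity)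
      _ = |b (n+1)| * (r^(n+1))⁻¹ := mul_one _
  have hFc : Continuous F := continuous_tsum hterm_cont hsummable hterm_bd
  have hvol : volume (Set.Ioo (0:ℝ) (2*π)) < ⊤ := by
    rw [Real.volume_Ioo]; exact ENNReal.ofReal_lt_top
  have hcont_int : ∀ {u : ℝ → ℝ}, Continuous u → IntegrableOn u (Set.Ioo (0:ℝ) (2*π)) :=
    fun hu => (hu.integrableOn_Icc).mono_set Set.Ioo_subset_Icc_self
  -- (i) integral of w
  have hsinN : ∫ ψ in (0:ℝ)..(2*π), Real.sin ((N:ℝ)*ψ + c N) = 0 := by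
    have h := intSin (N:ℤ) (by exact_mod_cast (by omega : N ≠ 0)) (c N)
    simpa using h
  have hIw : ∫ ψ in Set.Ioo (0:ℝ) (2*π), w ψ = π := by
    rw [iooEq']
    simp only [hw]
    rw [intervalIntegral.integral_div]
    have hcs : Continuous fun ψ : ℝ => ε * Real.sin ((N:ℝ)*ψ + c N) := by fun_prop
    rw [intervalIntegral.integral_add intervalIntegrable_const (hcs.intervalIntegrable _ _),
      intervalIntegral.integral_const, intervalIntegral.integral_const_mul, hsinN]
    simp
  -- (ii) integral of F * w
  have hsinw : ∀ n : ℕ, (∫ ψ in Set.Ioo (0:ℝ) (2*π),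
      Real.sin (((n:ℝ)+1)*ψ + c (n+1)) * w ψ) = if n + 1 = N then ε * (π/2) else 0 := by
    intro n
    rw [iooEq']
    have harg : ∀ ψ : ℝ, Real.sin (((n:ℝ)+1)*ψ + c (n+1)) * w ψ
        = Real.sin (((n+1:ℕ):ℝ)*ψ + c (n+1)) / 2
          + (ε/2) * (Real.sin (((n+1:ℕ):ℝ)*ψ + c (n+1)) * Real.sin ((N:ℝ)*ψ + c N)) := by
      intro ψ
      simp only [hw]
      push_cast
      ring
    simp_rw [harg]
    have hint1 : IntervalIntegrable (fun ψ => Real.sin (((n+1:ℕ):ℝ)*ψ + c (n+1)) / 2)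
        volume 0 (2*π) :=
      ((Real.continuous_sin.comp ((continuous_const.mul continuous_id).add
        continuous_const)).div_const 2).intervalIntegrable _ _
    have hint2 : IntervalIntegrable
        (fun ψ => (ε/2) * (Real.sin (((n+1:ℕ):ℝ)*ψ + c (n+1)) * Real.sin ((N:ℝ)*ψ + c N)))
        volume 0 (2*π) :=
      (continuous_const.mul ((Real.continuous_sin.comp ((continuous_const.mul continuous_id).add
        continuous_const)).mul (Real.continuous_sin.comp ((continuous_const.mul continuous_id).add
        continuous_const)))).intervalIntegrable _ _
    rw [intervalIntegral.integral_add hint1 hint2, intervalIntegral.integral_div,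
      intervalIntegral.integral_const_mul]
    have hz : ∫ ψ in (0:ℝ)..(2*π), Real.sin (((n+1:ℕ):ℝ)*ψ + c (n+1)) = 0 := by
      have h := intSin ((n+1:ℕ):ℤ) (by exact_mod_cast Nat.succ_ne_zero n) (c (n+1))
      simpa using h
    rw [hz, intSinSin (n+1) N (Nat.succ_ne_zero n) (by omega) (c (n+1)) (c N)]
    by_cases h : n + 1 = N
    · rw [if_pos h, if_pos h, h, sub_self, Real.cos_zero]
      ring
    · rw [if_neg h, if_neg h]
      ring
  have hIfw : ∫ ψ in Set.Ioo (0:ℝ) (2*π), F ψ * w ψ = t * (π/2) := by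
    have hrw : ∀ ψ : ℝ, F ψ * w ψ = ∑' n : ℕ, T n ψ * w ψ := by
      intro ψ
      rw [hFdef, tsum_mul_right]
    simp_rw [hrw]
    have hGint : ∀ n : ℕ, Integrable (fun ψ => T n ψ * w ψ)
        (volume.restrict (Set.Ioo (0:ℝ) (2*π))) :=
      fun n => hcont_int ((hterm_cont n).mul hwc)
    have hGbd : ∀ (n : ℕ) (ψ : ℝ), ‖T n ψ * w ψ‖ ≤ |b (n+1)| * (r^(n+1))⁻¹ := by
      intro n ψ
      rw [norm_mul]
      calc ‖T n ψ‖ * ‖w ψ‖ ≤ (|b (n+1)| * (r^(n+1))⁻¹) * 1 := by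
            apply mul_le_mul (hterm_bd n ψ) _ (norm_nonneg _)
              (mul_nonneg (abs_nonneg _) (inv_nonneg.mpr (pow_nonneg hr0.le _)))
            rw [Real.norm_eq_abs, abs_of_nonneg (hw0 ψ)]
            exact hw1 ψ
        _ = |b (n+1)| * (r^(n+1))⁻¹ := mul_one _
    have hGsum : Summable fun n : ℕ => ∫ ψ in Set.Ioo (0:ℝ) (2*π), ‖T n ψ * w ψ‖ := by
      apply Summable.of_nonneg_of_le (fun n => integral_nonneg (fun ψ => norm_nonneg _))
        (fun n => ?_) (hsummable.mul_left (2*π))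
      calc (∫ ψ in Set.Ioo (0:ℝ) (2*π), ‖T n ψ * w ψ‖)
          ≤ ∫ _ in Set.Ioo (0:ℝ) (2*π), |b (n+1)| * (r^(n+1))⁻¹ :=
            integral_mono ((hGint n).norm) (integrableOn_const hvol.ne)
              (fun ψ => hGbd n ψ)
        _ = (2*π) * (|b (n+1)| * (r^(n+1))⁻¹) := by
            rw [setIntegral_const, Real.volume_real_Ioo, smul_eq_mul,
              max_eq_left (by rw [sub_zero]; positivity)]
            ring
    rw [← integral_tsum_of_summable_integral_norm hGint hGsum]
    have hone : ∀ n : ℕ, (∫ ψ in Set.Ioo (0:ℝ) (2*π), T n ψ * w ψ)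
        = if n + 1 = N then ε * b N * (r^N)⁻¹ * (π/2) else 0 := by
      intro n
      have : ∀ ψ, T n ψ * w ψ = (b (n+1) * (r^(n+1))⁻¹) *
          (Real.sin (((n:ℝ)+1)*ψ + c (n+1)) * w ψ) := by
        intro ψ; simp only [hT]; ring
      simp_rw [this]
      rw [MeasureTheory.integral_const_mul, hsinw n]
      by_cases h : n + 1 = N
      · rw [if_pos h, if_pos h, h]
        ring
      · simp [h]
    simp_rw [hone]
    rw [tsum_eq_single (N-1) (fun n hn => by rw [if_neg (by omega)])]
    rw [if_pos (by omega)]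
  -- (iii) pointwise Jensen bound and conclusion
  set K : ℝ := Real.exp (-(2*M)) * r ^ (Q/π) * r * Real.exp t with hK
  set L : ℝ → ℝ := fun ψ => K * ((1 + (2 * F ψ - t)) * w ψ) with hL
  have hLint : Integrable L (volume.restrict (Set.Ioo (0:ℝ) (2*π))) := by
    apply Integrable.const_mul
    exact hcont_int (((continuous_const.add ((continuous_const.mul hFc).sub
      continuous_const)).mul hwc))
  have hpt : ∀ ψ : ℝ, L ψ ≤ Real.exp (2 * (φP r ψ + Q / (2 * π) * Real.log r + F ψ)) * r := by
    intro ψ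
    have e1 : Real.exp (2 * (φP r ψ + Q / (2 * π) * Real.log r + F ψ))
        = Real.exp (2 * φP r ψ) * Real.exp (Real.log r * (Q/π)) * Real.exp (2 * F ψ) := by
      rw [← Real.exp_add, ← Real.exp_add]
      congr 1
      field_simp
    have e2 : Real.exp (Real.log r * (Q/π)) = r ^ (Q/π) := (Real.rpow_def_of_pos hr0 _).symm
    have e3 : Real.exp (-(2*M)) ≤ Real.exp (2 * φP r ψ) := by
      apply Real.exp_le_exp.mpr
      have := hM r ψ hr0.le hrR.le
      have := neg_abs_le (φP r ψ)
      linarith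
    have e4 : Real.exp t * ((1 + (2 * F ψ - t)) * w ψ) ≤ Real.exp (2 * F ψ) := by
      have h1 : (1 + (2 * F ψ - t)) ≤ Real.exp (2 * F ψ - t) := by
        have := Real.add_one_le_exp (2 * F ψ - t)
        linarith
      have h2 : (1 + (2 * F ψ - t)) * w ψ ≤ Real.exp (2 * F ψ - t) * w ψ :=
        mul_le_mul_of_nonneg_right h1 (hw0 ψ)
      have h3 : Real.exp (2 * F ψ - t) * w ψ ≤ Real.exp (2 * F ψ - t) :=
        mul_le_of_le_one_right (Real.exp_pos _).le (hw1 ψ)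
      calc Real.exp t * ((1 + (2 * F ψ - t)) * w ψ)
          ≤ Real.exp t * Real.exp (2 * F ψ - t) :=
            mul_le_mul_of_nonneg_left (h2.trans h3) (Real.exp_pos _).le
        _ = Real.exp (2 * F ψ) := by rw [← Real.exp_add]; ring_nf
    rw [e1, e2]
    have hrpow : (0:ℝ) < r ^ (Q/π) := Real.rpow_pos_of_pos hr0 _
    calc L ψ = (r ^ (Q/π) * r) * (Real.exp (-(2*M)) * (Real.exp t * ((1 + (2 * F ψ - t)) * w ψ))) := by
          simp only [hL, hK]; ring
      _ ≤ (r ^ (Q/π) * r) * (Real.exp (2 * φP r ψ) * Real.exp (2 * F ψ)) := by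
          apply mul_le_mul_of_nonneg_left _ (by positivity)
          rcases le_or_gt (Real.exp t * ((1 + (2 * F ψ - t)) * w ψ)) 0 with h | h
          · calc Real.exp (-(2*M)) * (Real.exp t * ((1 + (2 * F ψ - t)) * w ψ))
                ≤ 0 := mul_nonpos_of_nonneg_of_nonpos (Real.exp_pos _).le h
              _ ≤ _ := by positivity
          · calc Real.exp (-(2*M)) * (Real.exp t * ((1 + (2 * F ψ - t)) * w ψ))
                ≤ Real.exp (2 * φP r ψ) * (Real.exp t * ((1 + (2 * F ψ - t)) * w ψ)) :=
                  mul_le_mul_of_nonneg_right e3 h.le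
              _ ≤ Real.exp (2 * φP r ψ) * Real.exp (2 * F ψ) :=
                  mul_le_mul_of_nonneg_left e4 (Real.exp_pos _).le
      _ = Real.exp (2 * φP r ψ) * r ^ (Q/π) * Real.exp (2 * F ψ) * r := by ring
  have hIL : ∫ ψ in Set.Ioo (0:ℝ) (2*π), L ψ = K * π := by
    simp only [hL]
    rw [MeasureTheory.integral_const_mul]
    congr 1
    have : ∀ ψ : ℝ, (1 + (2 * F ψ - t)) * w ψ = (1 - t) * w ψ + 2 * (F ψ * w ψ) := by
      intro ψ; ring
    simp_rw [this]
    rw [integral_add ((hcont_int hwc).const_mul _)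
      ((hcont_int (u := fun ψ => F ψ * w ψ) (hFc.mul hwc)).const_mul _),
      MeasureTheory.integral_const_mul, MeasureTheory.integral_const_mul, hIw, hIfw]
    ring
  calc π * Real.exp (-(2*M)) * r ^ (Q/π) * r * Real.exp t = K * π := by rw [hK]; ring
    _ = ∫ ψ in Set.Ioo (0:ℝ) (2*π), L ψ := hIL.symm
    _ ≤ _ := integral_mono hLint hgint hpt

/-- A harmonic function on the punctured disk `B_R \ {0}`, written in polar
coordinates in the general form
`φ(r,ψ) = φ_P(r,ψ) + (Q/2π) ln r + Σ_{n≥1} b_n r^{-n} sin(nψ + c_n)`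
with `φ_P` continuous and bounded on all of `B_R`: if the conformal area
`∫ e^{2φ} dA = ∫∫ e^{2φ} r dr dψ` is finite, then all `b_n` vanish and
`Q > -2π`. -/
theorem finite_conformal_area_of_cone_point
    (R Q : ℝ) (hR : 0 < R) (φP : ℝ → ℝ → ℝ) (b c : ℕ → ℝ)
    (hφP : Continuous fun q : ℝ × ℝ => φP q.1 q.2)
    (hbound : ∃ M : ℝ, ∀ r ψ : ℝ, 0 ≤ r → r ≤ R → |φP r ψ| ≤ M)
    (hsum : ∀ r ψ : ℝ, 0 < r →
      Summable fun n : ℕ => b (n + 1) * (r ^ (n + 1))⁻¹ * Real.sin (((n : ℝ) + 1) * ψ + c (n + 1)))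
    (harea : IntegrableOn
      (fun q : ℝ × ℝ =>
        Real.exp (2 * (φP q.1 q.2 + Q / (2 * π) * Real.log q.1 +
          ∑' n : ℕ, b (n + 1) * (q.1 ^ (n + 1))⁻¹ * Real.sin (((n : ℝ) + 1) * q.2 + c (n + 1)))) * q.1)
      (Set.Ioo (0 : ℝ) R ×ˢ Set.Ioo (0 : ℝ) (2 * π))) :
    (∀ n : ℕ, 1 ≤ n → b n = 0) ∧ -2 * π < Q := by
  obtain ⟨M, hM⟩ := hbound
  have hπ : (0:ℝ) < π := Real.pi_pos
  have hprod : Integrable (fun q : ℝ × ℝ => Real.exp (2 * (φP q.1 q.2 + Q / (2 * π) * Real.log q.1 +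
      ∑' n : ℕ, b (n + 1) * (q.1 ^ (n + 1))⁻¹ * Real.sin (((n : ℝ) + 1) * q.2 + c (n + 1)))) * q.1)
      ((volume.restrict (Set.Ioo (0:ℝ) R)).prod (volume.restrict (Set.Ioo (0:ℝ) (2*π)))) := by
    rw [Measure.prod_restrict, ← Measure.volume_eq_prod]
    exact harea
  have hslice := hprod.prod_right_ae
  have hIint := hprod.integral_prod_left
  -- Part 1 : all b vanish
  have hb : ∀ n : ℕ, 1 ≤ n → b n = 0 := by
    intro N hN1
    by_contra hbN
    have hbpos : 0 < |b N| := abs_pos.mpr hbN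
    set ε : ℝ := if 0 ≤ b N then 1 else -1 with hε
    have hε1 : |ε| ≤ 1 := by rw [hε]; split_ifs <;> norm_num
    have hεb : ε * b N = |b N| := by
      rw [hε]; split_ifs with h
      · rw [abs_of_nonneg h]; ring
      · rw [abs_of_neg (lt_of_not_ge h)]; ring
    set h : ℝ → ℝ := fun r => π * Real.exp (-(2*M)) * r ^ (Q/π) * r * Real.exp (|b N| * (r^N)⁻¹)
      with hh
    have hbound_ae : ∀ᵐ r ∂(volume.restrict (Set.Ioo (0:ℝ) R)),
        ‖h r‖ ≤ ∫ ψ, Real.exp (2 * (φP r ψ + Q / (2 * π) * Real.log r +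
          ∑' n : ℕ, b (n + 1) * (r ^ (n + 1))⁻¹ * Real.sin (((n : ℝ) + 1) * ψ + c (n + 1)))) * r
          ∂(volume.restrict (Set.Ioo (0:ℝ) (2*π))) := by
      filter_upwards [hslice, ae_restrict_mem measurableSet_Ioo] with r hint hr
      have hr0 : 0 < r := hr.1
      have hbd := slice_bound R Q M φP b c N hN1 hM ε hε1 r hr0 hr.2
        (summ b c r hr0 hsum) hint
      rw [hεb] at hbd
      have hpos : 0 < h r := by
        have h1 := Real.rpow_pos_of_pos hr0 (Q/π)
        have h2 := Real.exp_pos (-(2*M))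
        have h3 := Real.exp_pos (|b N| * (r^N)⁻¹)
        simp only [hh]
        exact mul_pos (mul_pos (mul_pos (mul_pos hπ h2) h1) hr0) h3
      rw [Real.norm_eq_abs, abs_of_pos hpos]
      exact hbd
    have hhm : AEStronglyMeasurable h (volume.restrict (Set.Ioo (0:ℝ) R)) := by
      apply Measurable.aestronglyMeasurable
      simp only [hh]
      fun_prop
    have hint_h : Integrable h (volume.restrict (Set.Ioo (0:ℝ) R)) :=
      Integrable.mono' hIint hhm hbound_ae
    set m : ℕ := ⌈Q/π + 2⌉₊ with hm
    set s : ℝ := Q/π + 1 - ((N*m : ℕ) : ℝ) with hs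
    have hcst : (0:ℝ) < π * Real.exp (-(2*M)) * |b N|^m / (m.factorial : ℝ) := by
      have := Real.exp_pos (-(2*M))
      have : (0:ℝ) < (m.factorial : ℝ) := by exact_mod_cast m.factorial_pos
      positivity
    set cst : ℝ := π * Real.exp (-(2*M)) * |b N|^m / (m.factorial : ℝ) with hcstdef
    have hkey : ∀ r ∈ Set.Ioo (0:ℝ) R, cst * r ^ s ≤ h r := by
      intro r hr
      have hr0 : 0 < r := hr.1
      have hx0 : (0:ℝ) ≤ |b N| * (r^N)⁻¹ := by positivity
      have hfac : (0:ℝ) < (m.factorial : ℝ) := by exact_mod_cast m.factorial_pos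
      have hexp_ge : (|b N| * (r^N)⁻¹)^m / (m.factorial : ℝ) ≤ Real.exp (|b N| * (r^N)⁻¹) := by
        have hsum_le := Real.sum_le_exp_of_nonneg hx0 (m+1)
        have hsingle : (|b N| * (r^N)⁻¹)^m / (m.factorial : ℝ) ≤
            ∑ i ∈ Finset.range (m+1), (|b N| * (r^N)⁻¹)^i / (i.factorial : ℝ) := by
          apply Finset.single_le_sum (f := fun i => (|b N| * (r^N)⁻¹)^i / (i.factorial : ℝ))
            (fun i _ => by positivity) (Finset.self_mem_range_succ m)
        linarith
      have hrs : r ^ s = r ^ (Q/π) * r * ((r^N)⁻¹)^m := by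
        rw [hs, show Q/π + 1 - ((N*m : ℕ) : ℝ) = Q/π + 1 + (-(((N*m : ℕ)) : ℝ)) by ring,
          Real.rpow_add hr0, Real.rpow_add hr0, Real.rpow_one, Real.rpow_neg hr0.le,
          Real.rpow_natCast, inv_pow, ← pow_mul]
      have hrpow : (0:ℝ) < r ^ (Q/π) := Real.rpow_pos_of_pos hr0 _
      calc cst * r ^ s
          = (π * Real.exp (-(2*M)) * r ^ (Q/π) * r) * ((|b N| * (r^N)⁻¹)^m / (m.factorial : ℝ)) := by
            rw [hcstdef, hrs, mul_pow]
            field_simp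
        _ ≤ (π * Real.exp (-(2*M)) * r ^ (Q/π) * r) * Real.exp (|b N| * (r^N)⁻¹) := by
            apply mul_le_mul_of_nonneg_left hexp_ge
            positivity
        _ = h r := by simp only [hh]
    have hrs_int : IntegrableOn (fun r : ℝ => r ^ s) (Set.Ioo (0:ℝ) R) := by
      apply Integrable.mono' (hint_h.const_mul cst⁻¹)
        (Measurable.aestronglyMeasurable (by fun_prop))
      filter_upwards [ae_restrict_mem measurableSet_Ioo] with r hr
      have hr0 : 0 < r := hr.1
      rw [Real.norm_eq_abs, abs_of_pos (Real.rpow_pos_of_pos hr0 s)]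
      have := hkey r hr
      rw [inv_mul_eq_div, le_div_iff₀ hcst, mul_comm]
      linarith
    have hs_gt := (intervalIntegral.integrableOn_Ioo_rpow_iff hR).mp hrs_int
    have h1 : (Q/π + 2) ≤ (m:ℝ) := Nat.le_ceil _
    have h2 : (m:ℝ) ≤ ((N*m : ℕ) : ℝ) := by
      exact_mod_cast Nat.le_mul_of_pos_left m (by omega : 0 < N)
    rw [hs] at hs_gt
    linarith
  refine ⟨hb, ?_⟩
  -- Part 2 : Q > -2π
  have hzero : ∀ r ψ : ℝ,
      (∑' n : ℕ, b (n + 1) * (r ^ (n + 1))⁻¹ * Real.sin (((n : ℝ) + 1) * ψ + c (n + 1))) = 0 := by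
    intro r ψ
    have hz : ∀ n : ℕ, b (n+1) * (r ^ (n + 1))⁻¹ * Real.sin (((n : ℝ) + 1) * ψ + c (n + 1)) = 0 := by
      intro n; rw [hb (n+1) (by omega)]; ring
    rw [tsum_congr hz, tsum_zero]
  set h2f : ℝ → ℝ := fun r => Real.exp (-(2*M)) * r ^ (Q/π) * r * (2*π) with hh2
  have hbound2 : ∀ᵐ r ∂(volume.restrict (Set.Ioo (0:ℝ) R)),
      ‖h2f r‖ ≤ ∫ ψ, Real.exp (2 * (φP r ψ + Q / (2 * π) * Real.log r +
        ∑' n : ℕ, b (n + 1) * (r ^ (n + 1))⁻¹ * Real.sin (((n : ℝ) + 1) * ψ + c (n + 1)))) * r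
        ∂(volume.restrict (Set.Ioo (0:ℝ) (2*π))) := by
    filter_upwards [hslice, ae_restrict_mem measurableSet_Ioo] with r hint hr
    have hr0 : 0 < r := hr.1
    have hrpow : (0:ℝ) < r ^ (Q/π) := Real.rpow_pos_of_pos hr0 _
    have hpt : ∀ ψ : ℝ, Real.exp (-(2*M)) * r ^ (Q/π) * r ≤
        Real.exp (2 * (φP r ψ + Q / (2 * π) * Real.log r +
          ∑' n : ℕ, b (n + 1) * (r ^ (n + 1))⁻¹ * Real.sin (((n : ℝ) + 1) * ψ + c (n + 1)))) * r := by
      intro ψ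
      rw [hzero r ψ, add_zero]
      have e1 : Real.exp (2 * (φP r ψ + Q / (2 * π) * Real.log r))
          = Real.exp (2 * φP r ψ) * Real.exp (Real.log r * (Q/π)) := by
        rw [← Real.exp_add]
        congr 1
        field_simp
      have e2 : Real.exp (Real.log r * (Q/π)) = r ^ (Q/π) := (Real.rpow_def_of_pos hr0 _).symm
      have e3 : Real.exp (-(2*M)) ≤ Real.exp (2 * φP r ψ) := by
        apply Real.exp_le_exp.mpr
        have := hM r ψ hr0.le hr.2.le
        have := neg_abs_le (φP r ψ)
        linarith
      rw [e1, e2]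
      apply mul_le_mul_of_nonneg_right _ hr0.le
      exact mul_le_mul_of_nonneg_right e3 hrpow.le
    have hvol : volume (Set.Ioo (0:ℝ) (2*π)) < ⊤ := by
      rw [Real.volume_Ioo]; exact ENNReal.ofReal_lt_top
    have hconst_int : Integrable (fun _ : ℝ => Real.exp (-(2*M)) * r ^ (Q/π) * r)
        (volume.restrict (Set.Ioo (0:ℝ) (2*π))) := integrableOn_const hvol.ne
    have hmono := integral_mono hconst_int hint hpt
    have hcval : (∫ _ : ℝ in Set.Ioo (0:ℝ) (2*π), Real.exp (-(2*M)) * r ^ (Q/π) * r)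
        = Real.exp (-(2*M)) * r ^ (Q/π) * r * (2*π) := by
      rw [setIntegral_const, Real.volume_real_Ioo, smul_eq_mul,
        max_eq_left (by rw [sub_zero]; positivity)]
      ring
    rw [hcval] at hmono
    have hpos2 : 0 < h2f r := by
      simp only [hh2]
      have := Real.exp_pos (-(2*M))
      positivity
    rw [Real.norm_eq_abs, abs_of_pos hpos2]
    exact hmono
  have hh2m : AEStronglyMeasurable h2f (volume.restrict (Set.Ioo (0:ℝ) R)) := by
    apply Measurable.aestronglyMeasurable
    simp only [hh2]
    fun_prop
  have hint_h2 : Integrable h2f (volume.restrict (Set.Ioo (0:ℝ) R)) :=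
    Integrable.mono' hIint hh2m hbound2
  have hrs_int : IntegrableOn (fun r : ℝ => r ^ (Q/π + 1)) (Set.Ioo (0:ℝ) R) := by
    apply Integrable.mono' (hint_h2.const_mul (Real.exp (2*M) * (2*π)⁻¹))
      (Measurable.aestronglyMeasurable (by fun_prop))
    filter_upwards [ae_restrict_mem measurableSet_Ioo] with r hr
    have hr0 : 0 < r := hr.1
    rw [Real.norm_eq_abs, abs_of_pos (Real.rpow_pos_of_pos hr0 _)]
    have heq : r ^ (Q/π + 1) = r ^ (Q/π) * r := by
      rw [Real.rpow_add hr0, Real.rpow_one]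
    rw [heq]
    simp only [hh2]
    rw [show Real.exp (2*M) * (2*π)⁻¹ * (Real.exp (-(2*M)) * r ^ (Q/π) * r * (2*π))
        = (Real.exp (2*M) * Real.exp (-(2*M))) * ((2*π)⁻¹ * (2*π)) * (r ^ (Q/π) * r) by ring,
      ← Real.exp_add, inv_mul_cancel₀ (by positivity : (2*π:ℝ) ≠ 0)]
    simp
  have hgt := (intervalIntegral.integrableOn_Ioo_rpow_iff hR).mp hrs_int
  have : -2 < Q/π := by linarith
  exact (lt_div_iff₀ hπ).mp this
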